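/- Fortuin–Kasteleyn correlation–connection theorem. Let G=(V,E) be a finite graph without loops, q ∈ {2,3,…}, β > 0, J=(J_e : e∈E) non-negative reals, and set p_e = 1 − e^{−βJ_e q} for each edge e. Then for all vertices x,y ∈ V, the Potts two-point correlation τ(x,y) = π(σ_x = σ_y) − 1/q satisfies τ(x,y) = (1 − 1/q) · φ_{p,q}(x ↔ y), where φ_{p,q} is the random-cluster measure on {0,1}^E with edge parameters p = (p_e) and cluster weight q. -/

import Mathlib

open scoped BigOperators symmDiff Classical

noncomputable section FlowsAndFerromagnets

/-- The number of non-zero mod-`q` flows on the (multi)graph with vertex type `V`,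
edge-index type `ι`, and a fixed orientation in which edge `i` leaves `s i` and
arrives at `t i`.  A mod-`q` flow assigns a value of `ZMod q` to every oriented edge
so that, at every vertex, the total flow leaving equals the total flow arriving
(mod `q`); it is non-zero if no edge carries the value `0`. -/
def flowCount (V : Type) [Fintype V] [DecidableEq V] {ι : Type} [Fintype ι]
    (s t : ι → V) (q : ℕ) : ℕ :=
  Nat.card {f : ι → ZMod q //
    (∀ i, f i ≠ 0) ∧
    ∀ v : V, (∑ i, if s i = v then f i else 0) = (∑ i, if t i = v then f i else 0)}

/-- `C(G_m; q)`: the number of non-zero mod-`q` flows on the multigraph `G_m`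
obtained from `G` (edges indexed by `E`, with endpoints `s e`, `t e`) by replacing
each edge `e` by `m e` parallel copies. -/
def flowCountM {V E : Type} [Fintype V] [DecidableEq V] [Fintype E]
    (s t : E → V) (m : E → ℕ) (q : ℕ) : ℕ :=
  flowCount V (fun x : Σ e : E, Fin (m e) => s x.1) (fun x : Σ e : E, Fin (m e) => t x.1) q

/-- `C(G_m^{x,y}; q)`: the number of non-zero mod-`q` flows on the multigraph `G_m`
augmented by one extra edge joining `x` and `y`. -/
def flowCountMxy {V E : Type} [Fintype V] [DecidableEq V] [Fintype E]
    (s t : E → V) (m : E → ℕ) (x y : V) (q : ℕ) : ℕ :=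
  flowCount V
    (fun o : Option (Σ e : E, Fin (m e)) => o.elim x (fun z => s z.1))
    (fun o : Option (Σ e : E, Fin (m e)) => o.elim y (fun z => t z.1)) q

/-- The Poisson weight `∏_e e^{-λ_e} λ_e^{m_e} / m_e!` of a vector of edge multiplicities. -/
def poissonWt {E : Type} [Fintype E] (lam : E → ℝ) (m : E → ℕ) : ℝ :=
  ∏ e, Real.exp (-lam e) * lam e ^ (m e) / (Nat.factorial (m e))

/-- Expectation `E_λ(f(P))` with respect to independent Poisson multiplicities `P e`
of mean `lam e`. -/
def poissonExp {E : Type} [Fintype E] (lam : E → ℝ) (f : (E → ℕ) → ℝ) : ℝ :=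
  ∑' m : E → ℕ, poissonWt lam m * f m

/-- Probability `P_λ(P ∈ A)` with respect to independent Poisson multiplicities. -/
def poissonProb {E : Type} [Fintype E] (lam : E → ℝ) (A : (E → ℕ) → Prop) : ℝ :=
  ∑' m : E → ℕ, poissonWt lam m * (if A m then 1 else 0)

/-- Probability of an event for two independent families of independent Poisson
multiplicities. -/
def poissonProb2 {E : Type} [Fintype E] (lam : E → ℝ)
    (A : (E → ℕ) → (E → ℕ) → Prop) : ℝ :=
  ∑' m : E → ℕ, ∑' m' : E → ℕ,
    poissonWt lam m * poissonWt lam m' * (if A m m' then 1 else 0)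

/-- The (unnormalised) Potts weight `exp(∑_e β J_e (q δ_e(σ) - 1))` of a spin
configuration `σ`. -/
def pottsWt {V E : Type} [Fintype E] (s t : E → V) (q : ℕ) (β : ℝ) (J : E → ℝ)
    (σ : V → Fin q) : ℝ :=
  Real.exp (∑ e, β * J e * ((q : ℝ) * (if σ (s e) = σ (t e) then 1 else 0) - 1))

/-- The Potts partition function `Z_P`. -/
def pottsZ (V : Type) {E : Type} [Fintype V] [DecidableEq V] [Fintype E]
    (s t : E → V) (q : ℕ) (β : ℝ) (J : E → ℝ) : ℝ :=
  ∑ σ : V → Fin q, pottsWt s t q β J σ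

/-- The Potts two-point function `σ(x,y) = ∑_σ (q δ_{σ_x,σ_y} - 1) π(σ)`. -/
def pottsTwoPoint {V E : Type} [Fintype V] [DecidableEq V] [Fintype E]
    (s t : E → V) (q : ℕ) (β : ℝ) (J : E → ℝ) (x y : V) : ℝ :=
  (∑ σ : V → Fin q, ((q : ℝ) * (if σ x = σ y then 1 else 0) - 1) * pottsWt s t q β J σ)
    / pottsZ V s t q β J

/-- The degree of the vertex `v` in the multigraph `G_m`. -/
def mDeg {V E : Type} [Fintype E] [DecidableEq V] (s t : E → V) (m : E → ℕ) (v : V) : ℕ :=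
  ∑ e, m e * ((if s e = v then 1 else 0) + (if t e = v then 1 else 0))

/-- The multigraph `G_m` is even: every vertex has even degree. -/
def IsEvenM {V E : Type} [Fintype E] [DecidableEq V] (s t : E → V) (m : E → ℕ) : Prop :=
  ∀ v : V, Even (mDeg s t m v)

/-- The multigraph `G_m^{x,y}` (with one extra edge joining `x` and `y`) is even. -/
def IsEvenMxy {V E : Type} [Fintype E] [DecidableEq V] (s t : E → V) (m : E → ℕ)
    (x y : V) : Prop :=
  ∀ v : V, Even (mDeg s t m v + (if v = x then 1 else 0) + (if v = y then 1 else 0))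

/-- The source set `∂m` of a vector of multiplicities: the set of vertices of odd
degree in `G_m`. -/
def sources {V E : Type} [Fintype E] [DecidableEq V] (s t : E → V) (m : E → ℕ) : Set V :=
  {v : V | Odd (mDeg s t m v)}

/-- The simple graph on `V` induced by the edges `e` satisfying `pred e`. -/
def openGraph {V E : Type} (s t : E → V) (pred : E → Prop) : SimpleGraph V :=
  SimpleGraph.fromRel (fun a b => ∃ e, pred e ∧ s e = a ∧ t e = b)

/-- `x ↔ y in m`: `x` and `y` lie in the same component of `(V, {e : m e ≥ 1})`. -/
def ConnectedIn {V E : Type} (s t : E → V) (m : E → ℕ) (x y : V) : Prop :=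
  (openGraph s t fun e => m e ≠ 0).Reachable x y

/-- `x ↔ y` in the percolation configuration `ω`. -/
def ConnectedInB {V E : Type} (s t : E → V) (ω : E → Bool) (x y : V) : Prop :=
  (openGraph s t fun e => ω e = true).Reachable x y

/-- The number of connected components of the graph `(V, {e : pred e})`
(isolated vertices count). -/
def numComp {V E : Type} [Fintype V] (s t : E → V) (pred : E → Prop) : ℕ :=
  Nat.card (openGraph s t pred).ConnectedComponent

/-- Product (percolation) weight of a configuration, with edge densities `p`. -/
def percWt {E : Type} [Fintype E] (p : E → ℝ) (ω : E → Bool) : ℝ :=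
  ∏ e, if ω e then p e else 1 - p e

/-- Random-cluster weight of the configuration `ω`. -/
def rcWt {V E : Type} [Fintype V] [Fintype E] (s t : E → V) (p : E → ℝ) (q : ℝ)
    (ω : E → Bool) : ℝ :=
  percWt p ω * q ^ numComp s t (fun e => ω e = true)

/-- Random-cluster probability `φ_{p,q}(A)` of an event `A`. -/
def rcProb {V E : Type} [Fintype V] [Fintype E] (s t : E → V) (p : E → ℝ) (q : ℝ)
    (A : (E → Bool) → Prop) : ℝ :=
  (∑ ω : E → Bool, if A ω then rcWt s t p q ω else 0) / (∑ ω : E → Bool, rcWt s t p q ω)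

/-- The Whitney rank-generating function `W(u,v) = ∑_{F' ⊆ F} u^{r(F')} v^{c(F')}`
of the multigraph with vertex type `V` and edge-index type `ι`, where
`r(F') = |V| - k(F')` and `c(F') = |F'| - |V| + k(F')`. -/
def whitney (V : Type) [Fintype V] {ι : Type} [Fintype ι] (s t : ι → V) (u v : ℝ) : ℝ :=
  ∑ F : Finset ι,
    u ^ (Fintype.card V - numComp s t (· ∈ F)) *
      v ^ (F.card - (Fintype.card V - numComp s t (· ∈ F)))

/-- `F_q(G_m) = (-1)^{|edges| + |V| - 1} W_{G_m}(-1, -q)`, a real-`q` version of the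
flow polynomial of the multigraph `G_m`. -/
def flowPolyW {V E : Type} [Fintype V] [Fintype E] (s t : E → V) (q : ℝ) (m : E → ℕ) : ℝ :=
  (-1 : ℝ) ^ ((∑ e, m e) + Fintype.card V - 1) *
    whitney V (fun x : Σ e : E, Fin (m e) => s x.1) (fun x : Σ e : E, Fin (m e) => t x.1)
      (-1) (-q)

/-- `F_q(G_m^{x,y})`: as `flowPolyW`, for the multigraph `G_m` with one extra edge
joining `x` and `y`. -/
def flowPolyWxy {V E : Type} [Fintype V] [Fintype E] (s t : E → V) (q : ℝ) (m : E → ℕ)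
    (x y : V) : ℝ :=
  (-1 : ℝ) ^ (((∑ e, m e) + 1) + Fintype.card V - 1) *
    whitney V (fun o : Option (Σ e : E, Fin (m e)) => o.elim x (fun z => s z.1))
      (fun o : Option (Σ e : E, Fin (m e)) => o.elim y (fun z => t z.1)) (-1) (-q)

end FlowsAndFerromagnets

section FKAux

open Finset

variable {V E : Type} [Fintype V] [DecidableEq V] [Fintype E]

/-- Edwards–Sokal joint weight. -/
def esW (s t : E → V) (q : ℕ) (p : E → ℝ) (σ : V → Fin q) (ω : E → Bool) : ℝ :=
  ∏ e, if ω e then p e * (if σ (s e) = σ (t e) then 1 else 0) else (1 - p e)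

lemma sum_ite_bool_pi (A B : E → ℝ) :
    ∑ ω : E → Bool, ∏ e, (if ω e then A e else B e) = ∏ e, (A e + B e) := by
  classical
  rw [← Fintype.prod_sum (fun e (b : Bool) => if b then A e else B e)]
  simp

lemma pottsWt_eq_sum_esW (s t : E → V) (q : ℕ) (β : ℝ) (J : E → ℝ) (p : E → ℝ)
    (hp : ∀ e, p e = 1 - Real.exp (-(β * J e * q))) (σ : V → Fin q) :
    pottsWt s t q β J σ
      = (∏ e, Real.exp (β * J e * ((q : ℝ) - 1))) * ∑ ω : E → Bool, esW s t q p σ ω := by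
  unfold esW
  rw [sum_ite_bool_pi, ← Finset.prod_mul_distrib]
  unfold pottsWt
  rw [Real.exp_sum]
  apply Finset.prod_congr rfl
  intro e _
  by_cases h : σ (s e) = σ (t e)
  · rw [if_pos h]
    have h1 : p e * 1 + (1 - p e) = 1 := by ring
    rw [h1, mul_one]
    congr 1; ring
  · rw [if_neg h, hp e]
    have h1 : (1 - Real.exp (-(β * J e * q))) * 0 + (1 - (1 - Real.exp (-(β * J e * q))))
        = Real.exp (-(β * J e * q)) := by ring
    rw [h1, ← Real.exp_add]
    congr 1; ring

lemma esW_eq (s t : E → V) (q : ℕ) (p : E → ℝ) (σ : V → Fin q) (ω : E → Bool) :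
    esW s t q p σ ω = percWt p ω *
      (if (∀ e, ω e = true → σ (s e) = σ (t e)) then 1 else 0) := by
  classical
  unfold esW percWt
  have h1 : (if (∀ e, ω e = true → σ (s e) = σ (t e)) then (1:ℝ) else 0)
      = ∏ e, (if (ω e = true → σ (s e) = σ (t e)) then (1:ℝ) else 0) := by
    rw [Finset.prod_boole]
    simp
  rw [h1, ← Finset.prod_mul_distrib]
  apply Finset.prod_congr rfl
  intro e _
  by_cases hω : ω e <;> by_cases hσ : σ (s e) = σ (t e) <;> simp [hω, hσ]

lemma constOn_iff (s t : E → V) (hloop : ∀ e, s e ≠ t e) (pred : E → Prop)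
    {α : Type} (σ : V → α) :
    (∀ e, pred e → σ (s e) = σ (t e)) ↔
      ∀ u v : V, (openGraph s t pred).Reachable u v → σ u = σ v := by
  constructor
  · intro h u v huv
    obtain ⟨w⟩ := huv
    induction w with
    | nil => rfl
    | cons hadj _ ih =>
        rw [← ih]
        rw [openGraph, SimpleGraph.fromRel_adj] at hadj
        obtain ⟨-, ⟨e, he, hs, ht⟩ | ⟨e, he, hs, ht⟩⟩ := hadj
        · rw [← hs, ← ht]; exact h e he
        · rw [← hs, ← ht]; exact (h e he).symm
  · intro h e he
    apply h
    apply SimpleGraph.Adj.reachable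
    rw [openGraph, SimpleGraph.fromRel_adj]
    exact ⟨hloop e, Or.inl ⟨e, he, rfl, rfl⟩⟩

/-- Functions constant on components correspond to functions on components. -/
def compEquiv (G : SimpleGraph V) (α : Type) :
    {σ : V → α // ∀ u v, G.Reachable u v → σ u = σ v} ≃ (G.ConnectedComponent → α) where
  toFun σ := Quot.lift σ.1 fun u v h => σ.2 u v h
  invFun g := ⟨fun v => g (G.connectedComponentMk v),
    fun u v h => congrArg g (SimpleGraph.ConnectedComponent.sound h)⟩
  left_inv σ := rfl
  right_inv g := by
    funext c
    induction c using SimpleGraph.ConnectedComponent.ind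
    rfl

/-- As `compEquiv`, with the values at `x` and `y` pinned to agree. -/
def compEquiv2 (G : SimpleGraph V) (α : Type) (x y : V) :
    {σ : V → α // σ x = σ y ∧ ∀ u v, G.Reachable u v → σ u = σ v}
      ≃ {g : G.ConnectedComponent → α //
          g (G.connectedComponentMk x) = g (G.connectedComponentMk y)} where
  toFun σ := ⟨Quot.lift σ.1 (fun u v h => σ.2.2 u v h), σ.2.1⟩
  invFun g := ⟨fun v => g.1 (G.connectedComponentMk v), g.2,
    fun u v h => congrArg g.1 (SimpleGraph.ConnectedComponent.sound h)⟩
  left_inv σ := rfl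
  right_inv g := by
    apply Subtype.ext
    funext c
    induction c using SimpleGraph.ConnectedComponent.ind
    rfl

/-- Pinning two distinct coordinates to agree. -/
noncomputable def pinEquiv {C α : Type} (cx cy : C) (hne : cx ≠ cy) :
    {g : C → α // g cx = g cy} ≃ ({c : C // c ≠ cy} → α) where
  toFun g c := g.1 c.1
  invFun h := ⟨fun c => if hc : c = cy then h ⟨cx, hne⟩ else h ⟨c, hc⟩, by
    dsimp only
    rw [dif_neg hne, dif_pos rfl]⟩
  left_inv g := by
    apply Subtype.ext
    funext c
    by_cases hc : c = cy
    · subst hc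
      simp only [dif_pos rfl]
      exact g.2.symm ▸ rfl
    · simp only [dif_neg hc]
  right_inv h := by
    funext c
    simp only [dif_neg c.2]

lemma card_constOn (G : SimpleGraph V) (q : ℕ) :
    Nat.card {σ : V → Fin q // ∀ u v, G.Reachable u v → σ u = σ v}
      = q ^ Nat.card G.ConnectedComponent := by
  rw [Nat.card_congr (compEquiv G (Fin q)), Nat.card_fun]
  simp

lemma card_constOn2 (G : SimpleGraph V) (q : ℕ) (x y : V) (hxy : ¬ G.Reachable x y) :
    q * Nat.card {σ : V → Fin q // σ x = σ y ∧ ∀ u v, G.Reachable u v → σ u = σ v}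
      = q ^ Nat.card G.ConnectedComponent := by
  classical
  haveI : Fintype G.ConnectedComponent := Fintype.ofFinite _
  have hne : G.connectedComponentMk x ≠ G.connectedComponentMk y := by
    intro h
    exact hxy (SimpleGraph.ConnectedComponent.exact h)
  rw [Nat.card_congr ((compEquiv2 G (Fin q) x y).trans (pinEquiv _ _ hne)), Nat.card_fun]
  have hsub : Nat.card {c : G.ConnectedComponent // c ≠ G.connectedComponentMk y}
      = Nat.card G.ConnectedComponent - 1 := by
    rw [Nat.card_eq_fintype_card, Nat.card_eq_fintype_card,
      Fintype.card_subtype_compl, Fintype.card_subtype_eq]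
  rw [hsub]
  have hK : 1 ≤ Nat.card G.ConnectedComponent := by
    have : Nonempty G.ConnectedComponent := ⟨G.connectedComponentMk x⟩
    exact Nat.one_le_iff_ne_zero.mpr (Nat.card_ne_zero.mpr ⟨this, inferInstance⟩)
  have hfq : Nat.card (Fin q) = q := by simp
  rw [hfq]
  conv_rhs => rw [show Nat.card G.ConnectedComponent
    = (Nat.card G.ConnectedComponent - 1) + 1 from (Nat.succ_pred_eq_of_pos hK).symm]
  rw [pow_succ]
  ring

lemma sum_esW (s t : E → V) (hloop : ∀ e, s e ≠ t e) (q : ℕ) (p : E → ℝ) (ω : E → Bool) :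
    ∑ σ : V → Fin q, esW s t q p σ ω
      = percWt p ω * (q : ℝ) ^ numComp s t (fun e => ω e = true) := by
  classical
  simp only [esW_eq]
  rw [← Finset.mul_sum]
  congr 1
  rw [Finset.sum_boole, ← Fintype.card_subtype, ← Nat.card_eq_fintype_card,
    Nat.card_congr (Equiv.subtypeEquivRight fun σ =>
      constOn_iff s t hloop (fun e => ω e = true) σ), card_constOn]
  push_cast
  rfl

lemma sum_esW_ind (s t : E → V) (hloop : ∀ e, s e ≠ t e) (q : ℕ) (hq : 2 ≤ q)
    (p : E → ℝ) (ω : E → Bool) (x y : V) :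
    ∑ σ : V → Fin q, (if σ x = σ y then esW s t q p σ ω else 0)
      = percWt p ω * (q : ℝ) ^ numComp s t (fun e => ω e = true)
          * (if ConnectedInB s t ω x y then 1 else (1/(q:ℝ))) := by
  classical
  have hq0 : (0:ℝ) < (q:ℝ) := by exact_mod_cast Nat.lt_of_lt_of_le Nat.zero_lt_two hq
  have hstep : ∀ σ : V → Fin q, (if σ x = σ y then esW s t q p σ ω else 0)
      = percWt p ω * (if (σ x = σ y ∧ ∀ e, ω e = true → σ (s e) = σ (t e))
          then (1:ℝ) else 0) := by
    intro σ
    rw [esW_eq]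
    by_cases h1 : σ x = σ y <;> by_cases h2 : ∀ e, ω e = true → σ (s e) = σ (t e) <;>
      simp [h1, h2]
  simp only [hstep]
  rw [← Finset.mul_sum, Finset.sum_boole, ← Fintype.card_subtype, ← Nat.card_eq_fintype_card,
    Nat.card_congr (Equiv.subtypeEquivRight (fun σ : V → Fin q =>
      and_congr_right fun _ => constOn_iff s t hloop (fun e => ω e = true) σ))]
  by_cases hconn : ConnectedInB s t ω x y
  · rw [if_pos hconn]
    have hiff : ∀ σ : V → Fin q,
        (σ x = σ y ∧ ∀ u v, (openGraph s t fun e => ω e = true).Reachable u v → σ u = σ v)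
          ↔ (∀ u v, (openGraph s t fun e => ω e = true).Reachable u v → σ u = σ v) := by
      intro σ
      constructor
      · exact And.right
      · intro h
        exact ⟨h x y hconn, h⟩
    rw [Nat.card_congr (Equiv.subtypeEquivRight hiff), card_constOn]
    push_cast
    rw [mul_one]
    rfl
  · rw [if_neg hconn]
    have hcard := card_constOn2 (openGraph s t fun e => ω e = true) q x y hconn
    have hcast : (q:ℝ) * (Nat.card {σ : V → Fin q // σ x = σ y ∧
        ∀ u v, (openGraph s t fun e => ω e = true).Reachable u v → σ u = σ v} : ℝ)
          = (q:ℝ) ^ numComp s t (fun e => ω e = true) := by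
      rw [← Nat.cast_mul, hcard]
      push_cast
      rfl
    rw [mul_assoc]
    congr 1
    rw [Nat.card_eq_fintype_card] at hcast
    field_simp
    rw [← Nat.card_eq_fintype_card] at hcast
    linear_combination hcast

end FKAux

/-- Fortuin–Kasteleyn correlation–connection theorem:
`τ(x,y) = π(σ_x = σ_y) - 1/q = (1 - 1/q) φ_{p,q}(x ↔ y)` with
`p_e = 1 - e^{-β J_e q}`. -/
theorem fk_correlation_connection
    (V E : Type) [Fintype V] [DecidableEq V] [Fintype E]
    (s t : E → V) (hloop : ∀ e, s e ≠ t e)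
    (q : ℕ) (hq : 2 ≤ q) (β : ℝ) (hβ : 0 < β)
    (J : E → ℝ) (hJ : ∀ e, 0 ≤ J e)
    (p : E → ℝ) (hp : ∀ e, p e = 1 - Real.exp (-(β * J e * q)))
    (x y : V) :
    (∑ σ : V → Fin q, if σ x = σ y then pottsWt s t q β J σ else 0) / pottsZ V s t q β J
        - 1 / q
      = (1 - 1 / q) * rcProb s t p (q : ℝ) (fun ω => ConnectedInB s t ω x y) := by
  classical
  have hq0 : (0:ℝ) < (q:ℝ) := by exact_mod_cast Nat.lt_of_lt_of_le Nat.zero_lt_two hq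
  set c : ℝ := ∏ e, Real.exp (β * J e * ((q:ℝ) - 1)) with hc_def
  have hc : 0 < c := Finset.prod_pos fun e _ => Real.exp_pos _
  set ZRC : ℝ := ∑ ω : E → Bool, rcWt s t p (q:ℝ) ω with hZ_def
  set A : ℝ := ∑ ω : E → Bool,
    if ConnectedInB s t ω x y then rcWt s t p (q:ℝ) ω else 0 with hA_def
  set B : ℝ := ∑ ω : E → Bool,
    if ConnectedInB s t ω x y then 0 else rcWt s t p (q:ℝ) ω with hB_def
  have hAB : A + B = ZRC := by
    rw [hA_def, hB_def, hZ_def, ← Finset.sum_add_distrib]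
    exact Finset.sum_congr rfl fun ω _ => by split <;> ring
  have hrc : ∀ ω : E → Bool, rcWt s t p (q:ℝ) ω
      = percWt p ω * (q:ℝ) ^ numComp s t (fun e => ω e = true) := fun ω => rfl
  have hPotts : pottsZ V s t q β J = c * ZRC := by
    unfold pottsZ
    calc ∑ σ : V → Fin q, pottsWt s t q β J σ
        = ∑ σ : V → Fin q, c * ∑ ω : E → Bool, esW s t q p σ ω :=
          Finset.sum_congr rfl fun σ _ => pottsWt_eq_sum_esW s t q β J p hp σ
      _ = c * ∑ σ : V → Fin q, ∑ ω : E → Bool, esW s t q p σ ω := by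
          rw [Finset.mul_sum]
      _ = c * ∑ ω : E → Bool, ∑ σ : V → Fin q, esW s t q p σ ω := by
          rw [Finset.sum_comm]
      _ = c * ZRC := by
          rw [hZ_def]
          congr 1
          exact Finset.sum_congr rfl fun ω _ => by
            rw [sum_esW s t hloop q p ω, hrc ω]
  have hNum : (∑ σ : V → Fin q, if σ x = σ y then pottsWt s t q β J σ else 0)
      = c * (A + (1/(q:ℝ)) * B) := by
    calc (∑ σ : V → Fin q, if σ x = σ y then pottsWt s t q β J σ else 0)
        = ∑ σ : V → Fin q, ∑ ω : E → Bool,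
            (if σ x = σ y then c * esW s t q p σ ω else 0) := by
          apply Finset.sum_congr rfl
          intro σ _
          by_cases h : σ x = σ y
          · simp only [if_pos h, pottsWt_eq_sum_esW s t q β J p hp σ, Finset.mul_sum]
            rfl
          · simp [h]
      _ = ∑ ω : E → Bool, ∑ σ : V → Fin q,
            (if σ x = σ y then c * esW s t q p σ ω else 0) := Finset.sum_comm
      _ = ∑ ω : E → Bool, c * ∑ σ : V → Fin q,
            (if σ x = σ y then esW s t q p σ ω else 0) := by
          apply Finset.sum_congr rfl
          intro ω _
          rw [Finset.mul_sum]
          exact Finset.sum_congr rfl fun σ _ => by split <;> ring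
      _ = ∑ ω : E → Bool, c * ((if ConnectedInB s t ω x y then rcWt s t p (q:ℝ) ω else 0)
            + (1/(q:ℝ)) * (if ConnectedInB s t ω x y then 0 else rcWt s t p (q:ℝ) ω)) := by
          apply Finset.sum_congr rfl
          intro ω _
          rw [sum_esW_ind s t hloop q hq p ω x y, hrc ω]
          split <;> ring
      _ = c * (A + (1/(q:ℝ)) * B) := by
          simp only [hA_def, hB_def, Finset.mul_sum, mul_add, Finset.sum_add_distrib,
            mul_ite, mul_zero, mul_one]
  have hPZpos : 0 < pottsZ V s t q β J := by
    unfold pottsZ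
    apply Finset.sum_pos (fun σ _ => Real.exp_pos _)
    haveI : Nonempty (V → Fin q) := ⟨fun _ => ⟨0, by omega⟩⟩
    exact Finset.univ_nonempty
  have hZRC : 0 < ZRC := by
    rw [hPotts] at hPZpos
    by_contra h
    push_neg at h
    nlinarith
  have hrcProb : rcProb s t p (q:ℝ) (fun ω => ConnectedInB s t ω x y) = A / ZRC := rfl
  rw [hNum, hPotts, hrcProb, ← hAB]
  have hABpos : 0 < A + B := hAB ▸ hZRC
  field_simp
  ring
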